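/- Let d ≥ 1, let B and Λ be finite sets, let M : B → Matrix (Fin d) (Fin d) ℂ be a POVM (each M_b positive semidefinite, ∑_b M_b = 1), let D : Λ → B → ℝ with ∑_{b∈B} D_λ(b) = 1 for every λ, and let Λ₀ ∈ ℝ be such that Λ₀ • 1 − ∑_b D_λ(b) • M_b is positive semidefinite for every λ. Assume S := ∑_b ( Tr(M_b²) − (Tr M_b)²/d ) > 0. If η ∈ ℝ with η ≤ 1 and there exist positive semidefinite matrices G_λ with ∑_λ D_λ(b) • G_λ = η • M_b + (1−η) • (Tr(M_b)/d) • 1 for every b, then η ≤ ( d²·Λ₀ − ∑_b (Tr M_b)² ) / ( d·∑_b Tr(M_b²) − ∑_b (Tr M_b)² ). (Here all traces are real since the matrices are positive semidefinite, and the denominator equals d·S > 0.) -/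

import Mathlib

open Matrix BigOperators
open scoped ComplexOrder

noncomputable section

lemma my_trace_nonneg {n : Type*} [Fintype n] {A : Matrix n n ℂ}
    (hA : A.PosSemidef) : 0 ≤ A.trace := by
  classical
  rw [Matrix.trace]
  apply Finset.sum_nonneg
  intro i _
  exact hA.diag_nonneg

lemma my_trace_mul_nonneg {n : Type*} [Fintype n] [DecidableEq n]
    {A B : Matrix n n ℂ} (hA : A.PosSemidef) (hB : B.PosSemidef) :
    0 ≤ (A * B).trace := by
  open scoped MatrixOrder Matrix.Norms.L2Operator in
  obtain ⟨C, rfl⟩ := CStarAlgebra.nonneg_iff_eq_star_mul_self.mp hA.nonneg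
  rw [Matrix.mul_assoc, Matrix.trace_mul_comm]
  exact my_trace_nonneg (hB.mul_mul_conjTranspose_same C)

theorem analytic_upper_bound_white_noise_robustness
    {d : ℕ} (hd : 1 ≤ d) {B Λ : Type*} [Fintype B] [Fintype Λ]
    (M : B → Matrix (Fin d) (Fin d) ℂ)
    (hMpsd : ∀ b, (M b).PosSemidef)
    (hMnorm : ∑ b : B, M b = 1)
    (D : Λ → B → ℝ)
    (hDnorm : ∀ l, ∑ b : B, D l b = 1)
    (Λ₀ : ℝ)
    (hΛ₀ : ∀ l : Λ,
      (Λ₀ • (1 : Matrix (Fin d) (Fin d) ℂ) - ∑ b : B, D l b • M b).PosSemidef)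
    (hS : 0 < ∑ b : B, ((M b * M b).trace.re - ((M b).trace.re) ^ 2 / (d : ℝ)))
    (η : ℝ) (hη : η ≤ 1)
    (G : Λ → Matrix (Fin d) (Fin d) ℂ)
    (hGpsd : ∀ l, (G l).PosSemidef)
    (hdecomp : ∀ b : B, ∑ l : Λ, D l b • G l =
      η • M b + (1 - η) • (((M b).trace / (d : ℂ)) • (1 : Matrix (Fin d) (Fin d) ℂ))) :
    η ≤ ((d : ℝ) ^ 2 * Λ₀ - ∑ b : B, ((M b).trace.re) ^ 2) /
      ((d : ℝ) * ∑ b : B, (M b * M b).trace.re - ∑ b : B, ((M b).trace.re) ^ 2) := by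
  have hdpos : (0:ℝ) < d := by exact_mod_cast hd
  have hdne : (d:ℂ) ≠ 0 := by exact_mod_cast hdpos.ne'
  -- traces are real
  have htre : ∀ b, (M b).trace = (((M b).trace.re : ℝ) : ℂ) := by
    intro b
    have h := my_trace_nonneg (hMpsd b)
    rw [Complex.nonneg_iff] at h
    exact Complex.ext rfl (by simp [← h.2])
  have hsre : ∀ b, (M b * M b).trace = (((M b * M b).trace.re : ℝ) : ℂ) := by
    intro b
    have h : (0:ℂ) ≤ (M b * M b).trace := my_trace_mul_nonneg (hMpsd b) (hMpsd b)
    rw [Complex.nonneg_iff] at h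
    exact Complex.ext rfl (by simp [← h.2])
  -- sum of traces of M equals d
  have htr_sum : ∑ b : B, (M b).trace = (d : ℂ) := by
    rw [← Matrix.trace_sum, hMnorm, Matrix.trace_one]
    simp
  -- sum of G is identity
  have hGsum : ∑ l : Λ, G l = 1 := by
    have h1 : ∑ b : B, ∑ l : Λ, D l b • G l
        = ∑ b : B, (η • M b + (1 - η) • (((M b).trace / (d : ℂ)) • (1 : Matrix (Fin d) (Fin d) ℂ))) :=
      Finset.sum_congr rfl fun b _ => hdecomp b
    rw [Finset.sum_comm] at h1
    have h2 : ∑ l : Λ, ∑ b : B, D l b • G l = ∑ l : Λ, G l := by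
      refine Finset.sum_congr rfl fun l _ => ?_
      rw [← Finset.sum_smul, hDnorm l, one_smul]
    rw [h2] at h1
    rw [h1, Finset.sum_add_distrib, ← Finset.smul_sum, hMnorm, ← Finset.smul_sum]
    have h3 : ∑ x : B, ((M x).trace / (d:ℂ)) • (1 : Matrix (Fin d) (Fin d) ℂ) = 1 := by
      rw [← Finset.sum_smul, ← Finset.sum_div, htr_sum, div_self hdne, one_smul]
    rw [h3, ← add_smul]
    norm_num
  have hGtr : ∑ l : Λ, (G l).trace = (d:ℂ) := by
    rw [← Matrix.trace_sum, hGsum, Matrix.trace_one]; simp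
  -- per-b complex identity from hdecomp
  have key : ∀ b : B, ∑ l : Λ, ((D l b : ℂ)) * ((M b) * (G l)).trace
      = (η:ℂ) * (M b * M b).trace + (((1-η) : ℝ):ℂ) * ((M b).trace / (d:ℂ) * (M b).trace) := by
    intro b
    have h := congrArg (fun A => ((M b) * A).trace) (hdecomp b)
    simp only [Matrix.mul_sum, Matrix.mul_smul, Matrix.trace_sum, Matrix.trace_smul,
      Matrix.mul_add, Matrix.trace_add, Matrix.mul_one, smul_eq_mul, Complex.real_smul] at h
    convert h using 2
  -- swap summation
  have hswap : ∑ l : Λ, (((∑ b : B, D l b • M b) * G l).trace)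
      = ∑ b : B, ((η:ℂ) * (M b * M b).trace + (((1-η):ℝ):ℂ) * ((M b).trace / (d:ℂ) * (M b).trace)) := by
    rw [← Finset.sum_congr rfl (fun b _ => key b), Finset.sum_comm]
    refine Finset.sum_congr rfl fun l _ => ?_
    rw [Finset.sum_mul, Matrix.trace_sum]
    refine Finset.sum_congr rfl fun b _ => ?_
    rw [Matrix.smul_mul, Matrix.trace_smul, Complex.real_smul]
  -- real part per-b of the RHS
  have hRHSre : ∀ b : B, ((η:ℂ) * (M b * M b).trace
        + (((1-η):ℝ):ℂ) * ((M b).trace / (d:ℂ) * (M b).trace)).re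
      = η * (M b * M b).trace.re + (1-η) * (((M b).trace.re)^2 / d) := by
    intro b
    rw [htre b, hsre b]
    have : (η:ℂ) * ((((M b * M b).trace.re:ℝ)):ℂ)
        + (((1-η):ℝ):ℂ) * (((((M b).trace.re:ℝ)):ℂ) / (d:ℂ) * ((((M b).trace.re:ℝ)):ℂ))
        = (((η * (M b * M b).trace.re + (1-η) * (((M b).trace.re)^2 / d)) : ℝ) : ℂ) := by
      push_cast; ring
    rw [this, Complex.ofReal_re]
    simp
  -- upper bound per l
  have hub : ∀ l : Λ, (((∑ b : B, D l b • M b) * G l).trace).re ≤ Λ₀ * ((G l).trace).re := by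
    intro l
    have h0 : (0:ℂ) ≤ ((Λ₀ • (1:Matrix (Fin d) (Fin d) ℂ) - ∑ b : B, D l b • M b) * (G l)).trace :=
      my_trace_mul_nonneg (hΛ₀ l) (hGpsd l)
    rw [Matrix.sub_mul, Matrix.smul_mul, Matrix.one_mul, Matrix.trace_sub, Matrix.trace_smul,
      Complex.nonneg_iff] at h0
    have h1 := h0.1
    simp only [Complex.sub_re, Complex.real_smul, Complex.mul_re, Complex.ofReal_re,
      Complex.ofReal_im, zero_mul, sub_zero] at h1
    linarith
  -- trace of sum of G, real part
  have hGtrre : ∑ l : Λ, ((G l).trace).re = (d:ℝ) := by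
    have := congrArg Complex.re hGtr
    simpa [Complex.re_sum] using this
  -- main real inequality
  have main : ∑ b : B, (η * (M b * M b).trace.re + (1-η) * (((M b).trace.re)^2 / d)) ≤ Λ₀ * d := by
    have h1 : (∑ l : Λ, (((∑ b : B, D l b • M b) * G l).trace)).re
        = ∑ b : B, (η * (M b * M b).trace.re + (1-η) * (((M b).trace.re)^2 / d)) := by
      rw [hswap, Complex.re_sum]
      exact Finset.sum_congr rfl fun b _ => hRHSre b
    rw [← h1, Complex.re_sum]
    calc ∑ l : Λ, (((∑ b : B, D l b • M b) * G l).trace).re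
        ≤ ∑ l : Λ, Λ₀ * ((G l).trace).re := Finset.sum_le_sum fun l _ => hub l
      _ = Λ₀ * d := by rw [← Finset.mul_sum, hGtrre]
  -- finish
  set Ss := ∑ b : B, (M b * M b).trace.re with hSs
  set St := ∑ b : B, ((M b).trace.re)^2 with hSt
  have hmain : η * Ss + (1-η) * (St / d) ≤ Λ₀ * d := by
    have : ∑ b : B, (η * (M b * M b).trace.re + (1-η) * (((M b).trace.re)^2 / d))
        = η * Ss + (1-η) * (St / d) := by
      rw [Finset.sum_add_distrib, ← Finset.mul_sum, ← Finset.mul_sum, ← Finset.sum_div]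
    linarith [main, this.symm.le, this.le]
  have hden : 0 < (d:ℝ) * Ss - St := by
    have h2 : ∑ b : B, ((M b * M b).trace.re - ((M b).trace.re) ^ 2 / (d : ℝ))
        = Ss - St / d := by
      rw [Finset.sum_sub_distrib, ← Finset.sum_div]
    rw [h2] at hS
    have := mul_pos hdpos hS
    rw [mul_sub] at this
    rw [mul_div_cancel₀ _ hdpos.ne'] at this
    linarith
  rw [le_div_iff₀ hden]
  nlinarith [mul_le_mul_of_nonneg_right hmain hdpos.le, mul_div_cancel₀ St hdpos.ne']
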